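/- Let A be a non-degenerate associative algebra, R : A → A left A-linear and S : A → A right A-linear. Then (A, R, S) is a Rota-Baxter system if and only if R∘S = 0 and S∘R = 0. -/

import Mathlib

/-- For a non-degenerate algebra `A`, left `A`-linear `R` and right `A`-linear `S`,
`(A, R, S)` is a Rota-Baxter system iff `R∘S = 0` and `S∘R = 0`. -/
theorem rbs_iff_orthogonality_nondegenerate
    {K A : Type*} [Field K] [NonUnitalRing A] [Module K A]
    (R S : A →ₗ[K] A)
    (hnd : ∀ b : A, ((∀ a : A, b * a = 0) ∨ (∀ a : A, a * b = 0)) → b = 0)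
    (hRleft : ∀ a b : A, R (a * b) = a * R b)
    (hSright : ∀ a b : A, S (a * b) = S a * b) :
    ((∀ a b : A, R a * R b = R (R a * b + a * S b)) ∧
     (∀ a b : A, S a * S b = S (R a * b + a * S b))) ↔
    ((∀ a : A, R (S a) = 0) ∧ (∀ a : A, S (R a) = 0)) := by
  constructor
  · rintro ⟨hR, hS⟩
    constructor
    · intro b
      apply hnd _ (Or.inr _)
      intro a
      have := hR a b
      rw [map_add, hRleft, hRleft] at this
      exact (left_eq_add.mp this)
    · intro a
      apply hnd _ (Or.inl _)
      intro b
      have := hS a b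
      rw [map_add, hSright, hSright] at this
      exact (right_eq_add.mp this)
  · rintro ⟨h1, h2⟩
    constructor
    · intro a b
      rw [map_add, hRleft, hRleft, h1, mul_zero, add_zero]
    · intro a b
      rw [map_add, hSright, hSright, h2, zero_mul, zero_add]
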